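/- Let δ₁₁ = [[−40,−11],[11,3]] ∈ SL(2,ℤ). Then the subgroup Γ₀⁰(11) of SL(2,ℤ) equals the subgroup generated by the principal congruence subgroup Γ(11) together with δ₁₁ and the negative identity matrix −I. -/

import Mathlib

open Matrix CongruenceSubgroup
open scoped MatrixGroups

/-- `Γ₀⁰(N)`: the subgroup of `SL(2, ℤ)` of matrices whose upper-right and lower-left
entries are both `≡ 0 mod N`. -/
def Gamma00 (N : ℕ) : Subgroup SL(2, ℤ) where
  carrier := { g | (g 0 1 : ZMod N) = 0 ∧ (g 1 0 : ZMod N) = 0 }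
  one_mem' := by simp
  mul_mem' := by
    intro a b ha hb
    have h1 := (Matrix.two_mul_expl a.1 b.1).2.1
    have h2 := (Matrix.two_mul_expl a.1 b.1).2.2.1
    simp only [Set.mem_setOf_eq, Matrix.SpecialLinearGroup.coe_mul] at *
    rw [h1, h2]
    push_cast
    rw [ha.1, ha.2, hb.1, hb.2]
    simp
  inv_mem' := by
    intro a ha
    simp only [Set.mem_setOf_eq] at *
    rw [Matrix.SpecialLinearGroup.SL2_inv_expl a]
    simpa using ⟨ha.1, ha.2⟩

/-- `δ₁₁ = [[−40,−11],[11,3]] ∈ SL(2, ℤ)`. -/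
def delta11 : SL(2, ℤ) :=
  ⟨!![-40, -11; 11, 3], by norm_num [Matrix.det_fin_two_of]⟩

/-- `−I ∈ SL(2, ℤ)`. -/
def negI : SL(2, ℤ) :=
  ⟨!![-1, 0; 0, -1], by norm_num [Matrix.det_fin_two_of]⟩

/-- `Γ₀⁰(11)` is generated by the principal congruence subgroup `Γ(11)` together with `δ₁₁`
and `−I`. -/
instance fact11 : Fact (Nat.Prime 11) := ⟨by norm_num⟩

lemma key7 : ∀ a d : ZMod 11, a * d = 1 → ∃ k < 10, (7:ZMod 11)^k = a := by decide

def t11 : SL(2, ZMod 11) := ⟨!![7,0;0,8], by norm_num [Matrix.det_fin_two_of]; decide⟩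

lemma t11_pow (k : ℕ) : (t11 ^ k : SL(2, ZMod 11)).1 = !![(7:ZMod 11)^k,0;0,8^k] := by
  induction k with
  | zero => simp; ext i j; fin_cases i <;> fin_cases j <;> simp
  | succ k ih =>
    rw [pow_succ, Matrix.SpecialLinearGroup.coe_mul, ih]
    show _ = !![(7:ZMod 11)^k * 7, 0; 0, (8:ZMod 11)^k * 8]
    rw [show (t11 : Matrix (Fin 2) (Fin 2) (ZMod 11)) = !![7,0;0,8] from rfl, Matrix.mul_fin_two]
    norm_num

theorem gamma00_eleven_eq_closure :
    Gamma00 11 = Subgroup.closure ((Gamma 11 : Set SL(2, ℤ)) ∪ {delta11, negI}) := by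
  apply le_antisymm
  · intro g hg
    obtain ⟨h01, h10⟩ : ((g 0 1 : ℤ) : ZMod 11) = 0 ∧ ((g 1 0 : ℤ) : ZMod 11) = 0 := hg
    have hdetZ : (g 0 0) * (g 1 1) - (g 0 1) * (g 1 0) = (1 : ℤ) := by
      have := g.2; rwa [Matrix.det_fin_two] at this
    have hdet : ((g 0 0 : ℤ) : ZMod 11) * ((g 1 1 : ℤ) : ZMod 11) = 1 := by
      have : (((g 0 0) * (g 1 1) - (g 0 1) * (g 1 0) : ℤ) : ZMod 11) = 1 := by
        rw [hdetZ]; norm_num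
      push_cast at this
      rw [h01, h10] at this
      simpa using this
    obtain ⟨k, -, hk⟩ := key7 _ _ hdet
    set τ : SL(2,ℤ) := negI * delta11 with hτ
    set φ := Matrix.SpecialLinearGroup.map (n := Fin 2) (Int.castRingHom (ZMod 11)) with hφ
    have hτcoe : (τ : Matrix (Fin 2) (Fin 2) ℤ) = !![40,11;-11,-3] := by
      show (negI : Matrix (Fin 2) (Fin 2) ℤ) * (delta11 : Matrix (Fin 2) (Fin 2) ℤ) = _
      simp [hτ, negI, delta11, Matrix.mul_fin_two]
    have hφτ : φ τ = t11 := by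
      ext i j
      fin_cases i <;> fin_cases j <;>
        simp [hφ, Matrix.SpecialLinearGroup.map_apply_coe, hτcoe, t11] <;> decide
    have h88 : ((g 1 1 : ℤ) : ZMod 11) = (8:ZMod 11)^k := by
      have h78 : (7:ZMod 11)^k * (8:ZMod 11)^k = 1 := by
        rw [← mul_pow, show (7*8:ZMod 11) = 1 by decide, one_pow]
      have ha0 : ((g 0 0 : ℤ) : ZMod 11) ≠ 0 := by
        intro h; rw [h, zero_mul] at hdet; exact absurd hdet.symm (by decide)
      apply mul_left_cancel₀ ha0
      rw [hdet, ← hk, h78]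
    have hgφ : φ g = t11 ^ k := by
      ext i j
      have := t11_pow k
      fin_cases i <;> fin_cases j <;>
        simp only [hφ, SL_reduction_mod_hom_val, this] <;> simp [hk.symm, h01, h10, h88]
    have hmem : (τ ^ k)⁻¹ * g ∈ Gamma 11 := by
      rw [Gamma_mem']
      show φ _ = 1
      rw [_root_.map_mul, _root_.map_inv, _root_.map_pow, hφτ, hgφ, inv_mul_cancel]
    set S := ((Gamma 11 : Set SL(2, ℤ)) ∪ {delta11, negI}) with hS
    have hdS : delta11 ∈ Subgroup.closure S :=
      Subgroup.subset_closure (Or.inr (Or.inl rfl))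
    have hnS : negI ∈ Subgroup.closure S :=
      Subgroup.subset_closure (Or.inr (Or.inr rfl))
    have hτS : τ ∈ Subgroup.closure S := mul_mem hnS hdS
    have : g = τ ^ k * ((τ ^ k)⁻¹ * g) := by group
    rw [this]
    exact mul_mem (pow_mem hτS k) (Subgroup.subset_closure (Or.inl hmem))
  · rw [Subgroup.closure_le]
    rintro x (hx | hx | hx)
    · have := (Gamma_mem.mp hx)
      exact ⟨this.2.1, this.2.2.1⟩
    · rw [hx]; exact ⟨by simp [delta11]; decide, by simp [delta11]; decide⟩
    · rw [hx]; exact ⟨by simp [negI], by simp [negI]⟩
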